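/- Solution of the lower-bound instance (Lemma A.1): the function x ↦ ∑_{i=1}^n f_i(x) attains its minimum over ℓ² at the unique point x* with coordinates x*_l = ρ^l (l ≥ 1), and the minimum value equals n(L − μ)(1 − ρ)/12. -/

import Mathlib

open scoped BigOperators

/-- The real Hilbert space `ℓ²` of square-summable sequences (indexed from `0`; the paper's
coordinate `l ≥ 1` corresponds to the index `l - 1`). -/
abbrev ell2 : Type := lp (fun _ : ℕ => ℝ) 2

/-- The function stored at the nodes of `V₁`:
`f(x) = (μ/2)‖x‖² + ((L−μ)/4)[(x_1 − 1)² + ∑_{l≥1} (x_{2l} − x_{2l+1})²]` (paper coordinates). -/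
noncomputable def fNodeV1 (μ L : ℝ) (x : ell2) : ℝ :=
  (μ / 2) * ‖x‖ ^ 2 +
    ((L - μ) / 4) * ((x 0 - 1) ^ 2 + ∑' l : ℕ, (x (2 * l + 1) - x (2 * l + 2)) ^ 2)

/-- The function stored at the nodes of `V₂`: `f(x) = (μ/2)‖x‖²`. -/
noncomputable def fNodeV2 (μ : ℝ) (x : ell2) : ℝ := (μ / 2) * ‖x‖ ^ 2

/-- The function stored at the nodes of `V₃`:
`f(x) = (μ/2)‖x‖² + ((L−μ)/4) ∑_{l≥1} (x_{2l−1} − x_{2l})²` (paper coordinates). -/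
noncomputable def fNodeV3 (μ L : ℝ) (x : ell2) : ℝ :=
  (μ / 2) * ‖x‖ ^ 2 + ((L - μ) / 4) * ∑' l : ℕ, (x (2 * l) - x (2 * l + 1)) ^ 2

/-- The function `f_i` for node `i ∈ {1, …, n}` with `n = 3m`:
nodes `1 … m` form `V₁`, nodes `m+1 … 2m` form `V₂`, nodes `2m+1 … 3m` form `V₃`. -/
noncomputable def fNode (μ L : ℝ) (m i : ℕ) (x : ell2) : ℝ :=
  if i ≤ m then fNodeV1 μ L x else if i ≤ 2 * m then fNodeV2 μ x else fNodeV3 μ L x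

section Auxiliary

open scoped ENNReal

lemma el2_summable_sq (x : ell2) : Summable fun k => (x k) ^ 2 := by
  have h := (lp.memℓp x).summable (p := 2) (by norm_num)
  have : (fun i : ℕ => ‖x i‖ ^ (2 : ℝ≥0∞).toReal) = fun i => (x i) ^ 2 := by
    funext i
    rw [show ((2:ℝ≥0∞).toReal) = ((2:ℕ):ℝ) by norm_num, Real.rpow_natCast]
    simp [sq_abs, Real.norm_eq_abs]
  rwa [this] at h

lemma el2_norm_sq (x : ell2) : ‖x‖ ^ 2 = ∑' k, (x k) ^ 2 := by
  have h := lp.norm_rpow_eq_tsum (p := 2) (by norm_num) x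
  rw [show ((2:ℝ≥0∞).toReal) = ((2:ℕ):ℝ) by norm_num, Real.rpow_natCast] at h
  rw [h]; congr 1; funext i
  rw [Real.rpow_natCast]; simp [sq_abs, Real.norm_eq_abs]

lemma el2_summable_diff_sq (x : ell2) : Summable fun k => (x k - x (k+1)) ^ 2 := by
  have h1 := el2_summable_sq x
  have h2 : Summable fun k => (x (k+1)) ^ 2 := (summable_nat_add_iff 1).2 h1
  refine Summable.of_nonneg_of_le (fun k => sq_nonneg _) (fun k => ?_)
    (((h1.mul_left 2).add (h2.mul_left 2)))
  nlinarith [sq_nonneg (x k + x (k+1))]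

lemma summable_geom_mul {ρ : ℝ} (hρ0 : 0 ≤ ρ) (hρ1 : ρ < 1) {g : ℕ → ℝ}
    (hg : Summable fun k => (g k) ^ 2) : Summable fun k => ρ ^ k * g k := by
  have hgeo : Summable fun k => (ρ ^ 2) ^ k :=
    summable_geometric_of_lt_one (by positivity) (by nlinarith)
  refine Summable.of_abs ?_
  refine Summable.of_nonneg_of_le (fun k => abs_nonneg _) (fun k => ?_)
    ((hgeo.add hg).mul_left (1/2 : ℝ))
  have h1 : |ρ ^ k * g k| ≤ ((ρ ^ k) ^ 2 + (g k) ^ 2) / 2 := by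
    have := abs_mul (ρ ^ k) (g k)
    nlinarith [sq_nonneg (|ρ ^ k| - |g k|), sq_abs (ρ ^ k), sq_abs (g k)]
  calc |ρ ^ k * g k| ≤ ((ρ ^ k) ^ 2 + (g k) ^ 2) / 2 := h1
    _ = 1/2 * ((ρ ^ 2) ^ k + (g k) ^ 2) := by rw [← pow_mul, ← pow_mul]; ring

/-- The sum of the three node functions, written via full-sequence tsums. -/
lemma G3_formula (μ L : ℝ) (x : ell2) :
    fNodeV1 μ L x + fNodeV2 μ x + fNodeV3 μ L x =
      3 * μ / 2 * ∑' k, (x k) ^ 2 +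
        (L - μ) / 4 * ((x 0 - 1) ^ 2 + ∑' k, (x k - x (k+1)) ^ 2) := by
  have hD := el2_summable_diff_sq x
  have he : Summable fun l => (x (2*l) - x (2*l+1)) ^ 2 := by
    have := hD.comp_injective (i := fun l : ℕ => 2 * l) (fun a b hab => by dsimp at hab; omega)
    exact this
  have ho : Summable fun l => (x (2*l+1) - x (2*l+2)) ^ 2 := by
    have := hD.comp_injective (i := fun l : ℕ => 2 * l + 1) (fun a b hab => by dsimp at hab; omega)
    exact this
  have hsplit : (∑' l, (x (2*l) - x (2*l+1)) ^ 2) + ∑' l, (x (2*l+1) - x (2*l+2)) ^ 2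
      = ∑' k, (x k - x (k+1)) ^ 2 := by
    have := tsum_even_add_odd (f := fun k => (x k - x (k+1)) ^ 2) he
      (by simpa [show ∀ l : ℕ, 2*l+1+1 = 2*l+2 from fun l => rfl] using ho)
    simpa [show ∀ l : ℕ, 2*l+1+1 = 2*l+2 from fun l => rfl] using this
  rw [fNodeV1, fNodeV2, fNodeV3, el2_norm_sq, ← hsplit]; ring

/-- The key quadratic-expansion identity: the objective at `x` splits as the objective at the
candidate minimizer `xs` plus a positive-semidefinite quadratic form in `x - xs`. -/
lemma decomp (μ L ρ : ℝ) (hρ0 : 0 < ρ) (hρ1 : ρ < 1)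
    (key : (L - μ) * (1 - ρ) ^ 2 = 6 * μ * ρ)
    (x xs : ell2) (hxs : ∀ l : ℕ, xs l = ρ ^ (l + 1)) :
    3 * μ / 2 * ∑' k, (x k) ^ 2 +
        (L - μ) / 4 * ((x 0 - 1) ^ 2 + ∑' k, (x k - x (k+1)) ^ 2) =
      (3 * μ / 2 * ∑' k, (xs k) ^ 2 +
        (L - μ) / 4 * ((xs 0 - 1) ^ 2 + ∑' k, (xs k - xs (k+1)) ^ 2)) +
      (3 * μ / 2 * ∑' k, (x k - xs k) ^ 2 +
        (L - μ) / 4 * ((x 0 - xs 0) ^ 2 +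
          ∑' k, ((x k - xs k) - (x (k+1) - xs (k+1))) ^ 2)) := by
  set h : ℕ → ℝ := fun k => x k - xs k with hdef
  have hcoe : ∀ k, x k - xs k = h k := fun k => rfl
  have hsub : ∀ k, (x - xs) k = h k := by
    intro k
    have := lp.coeFn_sub x xs
    simp [hdef, this]
  have hx : ∀ k, x k = ρ ^ (k+1) + h k := by
    intro k; rw [hdef]; simp [hxs k]
  have sh2 : Summable fun k => (h k) ^ 2 := by
    have := el2_summable_sq (x - xs)
    simpa [hsub] using this
  have sd2 : Summable fun k => (h k - h (k+1)) ^ 2 := by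
    have := el2_summable_diff_sq (x - xs)
    simpa [hsub] using this
  have sC : Summable fun k => ρ ^ k * h k := summable_geom_mul hρ0.le hρ1 sh2
  set C : ℝ := ∑' k, ρ ^ k * h k with hC
  have sG2 : Summable fun k => (ρ ^ (k+1)) ^ 2 := by
    have : Summable fun k : ℕ => (ρ ^ 2) ^ (k + 1) :=
      (summable_nat_add_iff 1).2 (summable_geometric_of_lt_one (by positivity) (by nlinarith))
    refine this.congr fun k => ?_
    rw [← pow_mul, ← pow_mul]; ring_nf
  have e1 : ∑' k, (x k) ^ 2
      = (∑' k, (ρ ^ (k+1)) ^ 2) + (2 * ρ) * C + ∑' k, (h k) ^ 2 := by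
    have p : ∀ k, (x k) ^ 2
        = (ρ ^ (k+1)) ^ 2 + (2 * ρ) * (ρ ^ k * h k) + (h k) ^ 2 := by
      intro k; rw [hx k]; ring
    rw [tsum_congr p, Summable.tsum_add (sG2.add (sC.mul_left (2*ρ))) sh2,
      Summable.tsum_add sG2 (sC.mul_left (2*ρ)), tsum_mul_left]
  have sCs : Summable fun k => ρ ^ (k+1) * h (k+1) :=
    (summable_nat_add_iff 1).2 sC
  have eshift : ∑' k, ρ ^ (k+1) * h (k+1) = C - h 0 := by
    have := Summable.tsum_eq_zero_add sC
    simp only [pow_zero, one_mul] at this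
    rw [hC, this]; ring
  have sB : Summable fun k => ρ ^ (k+1) * (h k - h (k+1)) := by
    have : Summable fun k => ρ * (ρ ^ k * h k) - ρ ^ (k+1) * h (k+1) :=
      (sC.mul_left ρ).sub sCs
    refine this.congr fun k => ?_; ring
  have eB : ∑' k, ρ ^ (k+1) * (h k - h (k+1)) = ρ * C - (C - h 0) := by
    have p : ∀ k, ρ ^ (k+1) * (h k - h (k+1))
        = ρ * (ρ ^ k * h k) - ρ ^ (k+1) * h (k+1) := fun k => by ring
    rw [tsum_congr p, Summable.tsum_sub (sC.mul_left ρ) sCs, tsum_mul_left, eshift]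
  have e2 : ∑' k, (x k - x (k+1)) ^ 2
      = (1 - ρ) ^ 2 * (∑' k, (ρ ^ (k+1)) ^ 2)
        + (2 * (1 - ρ)) * (ρ * C - (C - h 0))
        + ∑' k, (h k - h (k+1)) ^ 2 := by
    have p : ∀ k, (x k - x (k+1)) ^ 2
        = (1 - ρ) ^ 2 * (ρ ^ (k+1)) ^ 2
          + (2 * (1 - ρ)) * (ρ ^ (k+1) * (h k - h (k+1)))
          + (h k - h (k+1)) ^ 2 := by
      intro k; rw [hx k, hx (k+1)]; ring
    rw [tsum_congr p,
      Summable.tsum_add ((sG2.mul_left _).add (sB.mul_left _)) sd2,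
      Summable.tsum_add (sG2.mul_left _) (sB.mul_left _), tsum_mul_left, tsum_mul_left, eB]
  have e3 : ∑' k, (xs k) ^ 2 = ∑' k, (ρ ^ (k+1)) ^ 2 :=
    tsum_congr fun k => by rw [hxs k]
  have e4 : ∑' k, (xs k - xs (k+1)) ^ 2 = (1 - ρ) ^ 2 * ∑' k, (ρ ^ (k+1)) ^ 2 := by
    have p : ∀ k, (xs k - xs (k+1)) ^ 2 = (1 - ρ) ^ 2 * (ρ ^ (k+1)) ^ 2 := by
      intro k; rw [hxs k, hxs (k+1)]; ring
    rw [tsum_congr p, tsum_mul_left]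
  rw [e1, e2, e3, e4, hx 0, hxs 0]
  simp only [hcoe]
  linear_combination (-C / 2) * key

lemma rho_facts (μ L : ℝ) (hμ : 0 < μ) (hμL : μ < L) {ρ : ℝ}
    (hρ : ρ = (Real.sqrt (2 * L / (3 * μ) + 1 / 3) - 1) /
      (Real.sqrt (2 * L / (3 * μ) + 1 / 3) + 1)) :
    0 < ρ ∧ ρ < 1 ∧ (L - μ) * (1 - ρ) ^ 2 = 6 * μ * ρ := by
  set s := Real.sqrt (2 * L / (3 * μ) + 1 / 3) with hs
  have h3μ : (0:ℝ) < 3 * μ := by linarith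
  have harg : (1:ℝ) < 2 * L / (3 * μ) + 1 / 3 := by
    have h1 : (2:ℝ)/3 < 2 * L / (3 * μ) := by
      rw [div_lt_div_iff₀ (by norm_num) h3μ]; nlinarith
    linarith
  have hs2 : s ^ 2 = 2 * L / (3 * μ) + 1 / 3 := Real.sq_sqrt (by linarith)
  have hs0 : 0 ≤ s := Real.sqrt_nonneg _
  have hs1 : 1 < s := by nlinarith
  refine ⟨by rw [hρ]; exact div_pos (by linarith) (by linarith), ?_, ?_⟩
  · rw [hρ]; exact (div_lt_one (by linarith)).2 (by linarith)
  · have hne : s + 1 ≠ 0 := by linarith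
    have hμne : μ ≠ 0 := ne_of_gt hμ
    have hs2' : 3 * μ * s ^ 2 = 2 * L + μ := by
      rw [hs2]; field_simp
    rw [hρ]
    field_simp
    linear_combination (-2) * hs2'

lemma value_eq (μ L ρ : ℝ) (hρ0 : 0 < ρ) (hρ1 : ρ < 1)
    (key : (L - μ) * (1 - ρ) ^ 2 = 6 * μ * ρ) :
    3 * μ / 2 * (ρ ^ 2 * (1 - ρ ^ 2)⁻¹) +
      (L - μ) / 4 * ((ρ - 1) ^ 2 + (1 - ρ) ^ 2 * (ρ ^ 2 * (1 - ρ ^ 2)⁻¹)) =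
    (L - μ) * (1 - ρ) / 4 := by
  have h1 : (1:ℝ) - ρ ≠ 0 := by nlinarith
  have h2 : (1:ℝ) - ρ ^ 2 ≠ 0 := by nlinarith
  have hL : L - μ = 6 * μ * ρ / (1 - ρ) ^ 2 := by
    field_simp at key ⊢; linarith
  rw [hL]
  field_simp
  ring

lemma sum_fNode (μ L : ℝ) (m : ℕ) (x : ell2) :
    ∑ i ∈ Finset.Icc 1 (3 * m), fNode μ L m i x
      = m * (fNodeV1 μ L x + fNodeV2 μ x + fNodeV3 μ L x) := by
  have hIcc : Finset.Icc 1 (3 * m) = Finset.Ioc 0 (3 * m) := by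
    rw [← Finset.Icc_add_one_left_eq_Ioc, zero_add]
  rw [hIcc,
    ← Finset.sum_Ioc_consecutive _ (Nat.zero_le m) (by omega : m ≤ 3 * m),
    ← Finset.sum_Ioc_consecutive _ (by omega : m ≤ 2 * m) (by omega : 2 * m ≤ 3 * m)]
  have h1 : ∑ i ∈ Finset.Ioc 0 m, fNode μ L m i x = m * fNodeV1 μ L x := by
    have hc : ∀ i ∈ Finset.Ioc 0 m, fNode μ L m i x = fNodeV1 μ L x := fun i hi => by
      have := Finset.mem_Ioc.1 hi
      simp [fNode, this.2]
    rw [Finset.sum_congr rfl hc, Finset.sum_const, Nat.card_Ioc, nsmul_eq_mul]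
    norm_num
  have h2 : ∑ i ∈ Finset.Ioc m (2 * m), fNode μ L m i x = m * fNodeV2 μ x := by
    have hc : ∀ i ∈ Finset.Ioc m (2 * m), fNode μ L m i x = fNodeV2 μ x := fun i hi => by
      have := Finset.mem_Ioc.1 hi
      rw [fNode, if_neg (by omega), if_pos this.2]
    rw [Finset.sum_congr rfl hc, Finset.sum_const, Nat.card_Ioc, nsmul_eq_mul,
      show 2 * m - m = m by omega]
  have h3 : ∑ i ∈ Finset.Ioc (2 * m) (3 * m), fNode μ L m i x = m * fNodeV3 μ L x := by
    have hc : ∀ i ∈ Finset.Ioc (2 * m) (3 * m), fNode μ L m i x = fNodeV3 μ L x := fun i hi => by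
      have := Finset.mem_Ioc.1 hi
      rw [fNode, if_neg (by omega), if_neg (by omega)]
    rw [Finset.sum_congr rfl hc, Finset.sum_const, Nat.card_Ioc, nsmul_eq_mul,
      show 3 * m - 2 * m = m by omega]
  rw [h1, h2, h3]; ring

end Auxiliary

/-- **Solution of the lower-bound instance (Lemma A.1).**
The function `x ↦ ∑_{i=1}^n f_i(x)` attains its minimum over `ℓ²` at the unique point `x*`
with (paper) coordinates `x*_l = ρ^l` (`l ≥ 1`), and the minimum value equals
`n(L − μ)(1 − ρ)/12`. -/
theorem lower_bound_instance_solution (μ L : ℝ) (hμ : 0 < μ) (hμL : μ < L)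
    (ρ : ℝ)
    (hρ : ρ = (Real.sqrt (2 * L / (3 * μ) + 1 / 3) - 1) /
      (Real.sqrt (2 * L / (3 * μ) + 1 / 3) + 1))
    (m : ℕ) (hm : 1 ≤ m)
    (xs : ell2) (hxs : ∀ l : ℕ, xs l = ρ ^ (l + 1)) :
    (∑ i ∈ Finset.Icc 1 (3 * m), fNode μ L m i xs) =
        (3 * m : ℝ) * (L - μ) * (1 - ρ) / 12 ∧
    (∀ x : ell2, x ≠ xs →
      (∑ i ∈ Finset.Icc 1 (3 * m), fNode μ L m i xs) <
        ∑ i ∈ Finset.Icc 1 (3 * m), fNode μ L m i x) := by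
  obtain ⟨hρ0, hρ1, key⟩ := rho_facts μ L hμ hμL hρ
  have hρsq : ρ ^ 2 < 1 := by nlinarith
  -- geometric sums at xs
  have tT : ∑' k, (xs k) ^ 2 = ρ ^ 2 * (1 - ρ ^ 2)⁻¹ := by
    have p : ∀ k, (xs k) ^ 2 = ρ ^ 2 * (ρ ^ 2) ^ k := by
      intro k; rw [hxs k]; ring
    rw [tsum_congr p, tsum_mul_left,
      tsum_geometric_of_lt_one (by positivity) hρsq]
  have tD : ∑' k, (xs k - xs (k+1)) ^ 2
      = (1 - ρ) ^ 2 * (ρ ^ 2 * (1 - ρ ^ 2)⁻¹) := by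
    have p : ∀ k, (xs k - xs (k+1)) ^ 2 = ((1 - ρ) ^ 2 * ρ ^ 2) * (ρ ^ 2) ^ k := by
      intro k; rw [hxs k, hxs (k+1)]; ring
    rw [tsum_congr p, tsum_mul_left,
      tsum_geometric_of_lt_one (by positivity) hρsq]
    ring
  have hGxs : fNodeV1 μ L xs + fNodeV2 μ xs + fNodeV3 μ L xs
      = (L - μ) * (1 - ρ) / 4 := by
    rw [G3_formula, tT, tD, hxs 0, pow_one]
    exact value_eq μ L ρ hρ0 hρ1 key
  constructor
  · rw [sum_fNode, hGxs]; push_cast; ring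
  · intro x hx
    have hxne : ∃ k, x k - xs k ≠ 0 := by
      by_contra hc
      push_neg at hc
      exact hx (lp.ext (funext fun k => by have := hc k; linarith))
    obtain ⟨k0, hk0⟩ := hxne
    have hsub : ∀ k : ℕ, (x - xs) k = x k - xs k := by
      intro k
      have := lp.coeFn_sub x xs
      simp [this]
    have sh2 : Summable fun k => (x k - xs k) ^ 2 := by
      have := el2_summable_sq (x - xs)
      simpa [hsub] using this
    have hTh : 0 < ∑' k, (x k - xs k) ^ 2 :=
      Summable.tsum_pos sh2 (fun i => sq_nonneg _) k0
        (lt_of_le_of_ne (sq_nonneg _) (Ne.symm (pow_ne_zero 2 hk0)))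
    have hDh : 0 ≤ ∑' k, ((x k - xs k) - (x (k+1) - xs (k+1))) ^ 2 :=
      tsum_nonneg fun k => sq_nonneg _
    have hGlt : fNodeV1 μ L xs + fNodeV2 μ xs + fNodeV3 μ L xs
        < fNodeV1 μ L x + fNodeV2 μ x + fNodeV3 μ L x := by
      rw [G3_formula μ L x, G3_formula μ L xs,
        decomp μ L ρ hρ0 hρ1 key x xs hxs]
      have hq1 : 0 < 3 * μ / 2 * ∑' k, (x k - xs k) ^ 2 := by positivity
      have hq2 : 0 ≤ (L - μ) / 4 * ((x 0 - xs 0) ^ 2 +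
          ∑' k, ((x k - xs k) - (x (k+1) - xs (k+1))) ^ 2) := by
        have hq3 : 0 ≤ (x 0 - xs 0) ^ 2 := sq_nonneg _
        nlinarith
      linarith
    rw [sum_fNode, sum_fNode]
    have hmpos : (0:ℝ) < (m:ℝ) := by exact_mod_cast hm
    exact mul_lt_mul_of_pos_left hGlt hmpos
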